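/- As Q → ∞, each of the proportions ρ²_Q((0,1),2), ρ²_Q((1,0),2) and ρ²_Q((1,1),2) of pairs of consecutive Farey fractions of order Q whose denominators are respectively (even, odd), (odd, even) and (odd, odd) tends to 1/3, while ρ²_Q((0,0),2) = 0 for every Q. -/

import Mathlib

open Filter MeasureTheory Real Asymptotics Topology

noncomputable section

/-- The Farey fractions of order `Q`: all rationals in `[0,1]` with denominator `≤ Q`. -/
def fareyFinset (Q : ℕ) : Finset ℚ :=
  ((Finset.range (Q + 1) ×ˢ Finset.Icc 1 Q).image fun p => (p.1 : ℚ) / (p.2 : ℚ)).filter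
    fun x => x ≤ 1

/-- The Farey sequence of order `Q`, listed in increasing order. -/
def fareyList (Q : ℕ) : List ℚ := (fareyFinset Q).sort (· ≤ ·)

/-- `N^r_Q(c,d)`: the number of `r`-tuples of denominators of consecutive fractions in the
Farey sequence of order `Q` that are congruent to `c` componentwise modulo `d`. -/
def Nr (Q r d : ℕ) (c : Fin r → ℕ) : ℕ :=
  ((Finset.range ((fareyList Q).length + 1 - r)).filter fun i =>
    ∀ j : Fin r, ((fareyList Q).getD (i + (j : ℕ)) 0).den % d = c j % d).card

/-- `ρ^r_Q(c,d) = N^r_Q(c,d) / (#F_Q - (r-1))`: the proportion of `r`-tuples of consecutive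
Farey fractions of order `Q` whose denominators are congruent to `c` modulo `d`. -/
def rho (Q r d : ℕ) (c : Fin r → ℕ) : ℝ :=
  (Nr Q r d c : ℝ) / (((fareyFinset Q).card : ℝ) - ((r : ℝ) - 1))

lemma mem_fareyFinset {Q : ℕ} {x : ℚ} :
    x ∈ fareyFinset Q ↔ 0 ≤ x ∧ x ≤ 1 ∧ x.den ≤ Q := by
  constructor
  · intro hx
    rw [fareyFinset, Finset.mem_filter] at hx
    obtain ⟨hx1, hle⟩ := hx
    rw [Finset.mem_image] at hx1
    obtain ⟨p, hp, rfl⟩ := hx1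
    rw [Finset.mem_product, Finset.mem_range, Finset.mem_Icc] at hp
    refine ⟨by positivity, hle, ?_⟩
    have hdvd : (((p.1 : ℚ) / (p.2 : ℚ)).den : ℤ) ∣ (p.2 : ℤ) := by
      rw [show ((p.1:ℚ)/(p.2:ℚ)) = Rat.divInt p.1 p.2 by
        rw [Rat.divInt_eq_div]; push_cast; ring]
      exact Rat.den_dvd _ _
    have h2 : (0:ℤ) < (p.2 : ℤ) := by exact_mod_cast hp.2.1
    have h3 := Int.le_of_dvd h2 hdvd
    have h4 : (((p.1 : ℚ) / (p.2 : ℚ)).den : ℤ) ≤ (Q : ℤ) :=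
      h3.trans (by exact_mod_cast hp.2.2)
    exact_mod_cast h4
  · rintro ⟨h0, h1, hden⟩
    rw [fareyFinset, Finset.mem_filter]
    refine ⟨Finset.mem_image.2 ⟨(x.num.toNat, x.den), ?_, ?_⟩, h1⟩
    · rw [Finset.mem_product, Finset.mem_range, Finset.mem_Icc]
      have hnum0 : 0 ≤ x.num := Rat.num_nonneg.2 h0
      have hnd : x.num ≤ (x.den : ℤ) := by
        by_contra h
        push_neg at h
        have : (1:ℚ) < x := by
          rw [show (x:ℚ) = (x.num : ℚ)/(x.den:ℚ) from (Rat.num_div_den x).symm]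
          rw [lt_div_iff₀ (by positivity)]
          simpa using (by exact_mod_cast h : (x.den:ℚ) < (x.num:ℚ))
        linarith
      constructor
      · have : x.num.toNat ≤ x.den := by omega
        omega
      · exact ⟨x.pos, hden⟩
    · simp only
      have : ((x.num.toNat : ℕ) : ℚ) = ((x.num : ℤ) : ℚ) := by
        exact_mod_cast congrArg (fun z : ℤ => (z : ℚ)) (Int.toNat_of_nonneg (Rat.num_nonneg.2 h0))
      rw [this]
      exact Rat.num_div_den x

lemma zero_mem_farey {Q : ℕ} (hQ : 1 ≤ Q) : (0:ℚ) ∈ fareyFinset Q := by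
  rw [mem_fareyFinset]; norm_num; exact hQ

lemma one_mem_farey {Q : ℕ} (hQ : 1 ≤ Q) : (1:ℚ) ∈ fareyFinset Q := by
  rw [mem_fareyFinset]; norm_num; exact hQ

lemma exists_unique_int_residue (b m : ℤ) {q : ℤ} (hq : 0 < q) :
    ∃! n : ℤ, m < n ∧ n ≤ m + q ∧ n ≡ b [ZMOD q] := by
  refine ⟨m + 1 + (b - (m+1)) % q, ⟨?_, ?_, ?_⟩, ?_⟩
  · have := Int.emod_nonneg (b - (m+1)) hq.ne'
    omega
  · have := Int.emod_lt_of_pos (b - (m+1)) hq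
    omega
  · have h1 : (b - (m+1)) % q ≡ b - (m+1) [ZMOD q] := Int.emod_emod_of_dvd _ dvd_rfl
    calc m + 1 + (b - (m+1)) % q ≡ m + 1 + (b - (m+1)) [ZMOD q] := h1.add_left _
      _ = b := by ring
  · rintro n' ⟨h1, h2, h3⟩
    have hmod : n' ≡ m + 1 + (b - (m+1)) % q [ZMOD q] := by
      have h1' : (b - (m+1)) % q ≡ b - (m+1) [ZMOD q] := Int.emod_emod_of_dvd _ dvd_rfl
      calc n' ≡ b [ZMOD q] := h3
        _ = m + 1 + (b - (m+1)) := by ring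
        _ ≡ m + 1 + (b - (m+1)) % q [ZMOD q] := (h1'.add_left _).symm
    obtain ⟨k, hk⟩ := Int.ModEq.dvd hmod
    have hb1 : 0 ≤ (b - (m+1)) % q := Int.emod_nonneg _ hq.ne'
    have hb2 : (b - (m+1)) % q < q := Int.emod_lt_of_pos _ hq
    have hk0 : k = 0 := by
      rcases lt_trichotomy k 0 with h|h|h
      · nlinarith
      · exact h
      · nlinarith
    rw [hk0, mul_zero] at hk
    omega

lemma gap_lemma {x z : ℚ} (h : x < z) :
    (1:ℚ) / ((z.den:ℚ) * (x.den:ℚ)) ≤ z - x := by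
  have hdx : (0:ℚ) < (x.den:ℚ) := by exact_mod_cast x.pos
  have hdz : (0:ℚ) < (z.den:ℚ) := by exact_mod_cast z.pos
  have e1 : (z.num:ℚ) = z * (z.den:ℚ) := (div_eq_iff hdz.ne').1 (Rat.num_div_den z)
  have e2 : (x.num:ℚ) = x * (x.den:ℚ) := (div_eq_iff hdx.ne').1 (Rat.num_div_den x)
  have key : (z - x) * ((z.den:ℚ) * (x.den:ℚ)) = ((z.num * x.den - x.num * z.den : ℤ) : ℚ) := by
    push_cast
    linear_combination (z.den:ℚ) * e2 - (x.den:ℚ) * e1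
  have hdpos : (0:ℤ) < z.num * x.den - x.num * z.den := by
    have : (0:ℚ) < ((z.num * x.den - x.num * z.den : ℤ) : ℚ) := by
      rw [← key]; exact mul_pos (sub_pos.2 h) (by positivity)
    exact_mod_cast this
  have hd1 : (1:ℚ) ≤ ((z.num * x.den - x.num * z.den : ℤ) : ℚ) := by exact_mod_cast hdpos
  rw [div_le_iff₀ (by positivity)]
  calc (1:ℚ) ≤ _ := hd1
    _ = (z - x) * ((z.den:ℚ) * (x.den:ℚ)) := key.symm

lemma farey_succ {Q : ℕ} (hQ : 1 ≤ Q) {x : ℚ} (hx : x ∈ fareyFinset Q) (hx1 : x < 1) :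
    ∃ y ∈ fareyFinset Q, x < y ∧ (∀ z ∈ fareyFinset Q, x < z → y ≤ z) ∧
      y.num * (x.den : ℤ) - x.num * (y.den : ℤ) = 1 ∧ (Q : ℤ) < (x.den : ℤ) + (y.den : ℤ) := by
  obtain ⟨hx0, hxle, hxden⟩ := mem_fareyFinset.1 hx
  have hq0 : (0:ℤ) < (x.den:ℤ) := by exact_mod_cast x.pos
  have ha0 : 0 ≤ x.num := Rat.num_nonneg.2 hx0
  have haq : x.num < (x.den:ℤ) := by exact_mod_cast Rat.lt_one_iff_num_lt_denom.2 hx1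
  have hcop : IsCoprime x.num (x.den:ℤ) := by
    rw [Int.isCoprime_iff_gcd_eq_one]
    exact x.reduced
  obtain ⟨u, v, huv⟩ := hcop
  obtain ⟨q', ⟨hq'1, hq'2, hq'3⟩, -⟩ := exists_unique_int_residue (-u) ((Q:ℤ) - x.den) hq0
  have hqQ : (x.den:ℤ) ≤ Q := by exact_mod_cast hxden
  have hq'pos : 0 < q' := by omega
  have hq'Q : q' ≤ (Q:ℤ) := by omega
  have hdvd : (x.den:ℤ) ∣ x.num * q' + 1 := by
    have h1 : x.num * q' + 1 ≡ x.num * (-u) + 1 [ZMOD (x.den:ℤ)] := (hq'3.mul_left _).add_right 1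
    have h2 : x.num * (-u) + 1 = v * x.den := by linarith
    have h3 : x.num * q' + 1 ≡ 0 [ZMOD (x.den:ℤ)] := by
      refine h1.trans ?_
      rw [h2]
      exact (Int.modEq_zero_iff_dvd).2 ⟨v, by ring⟩
    exact (Int.modEq_zero_iff_dvd).1 h3
  set A : ℤ := (x.num * q' + 1) / x.den with hA
  have hAq : A * x.den = x.num * q' + 1 := Int.ediv_mul_cancel hdvd
  have hA0 : 0 < A := by nlinarith
  have hAle : A ≤ q' := by nlinarith
  have hcop' : Nat.Coprime A.natAbs q'.natAbs := by
    have h := Int.isCoprime_iff_gcd_eq_one.1 (⟨(x.den:ℤ), -x.num, by linarith⟩ : IsCoprime A q')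
    simpa [Int.gcd] using h
  set y : ℚ := (A : ℚ) / (q' : ℚ) with hy
  have ynum : y.num = A := Rat.num_div_eq_of_coprime hq'pos hcop'
  have yden : ((y.den:ℤ)) = q' := Rat.den_div_eq_of_coprime hq'pos hcop'
  have hdxQ : (0:ℚ) < ((x.den:ℕ):ℚ) := by exact_mod_cast x.pos
  have hq'Q0 : (0:ℚ) < ((q':ℤ):ℚ) := by exact_mod_cast hq'pos
  have hkey : y - x = 1 / ((x.den:ℚ) * ((q':ℤ):ℚ)) := by
    have hAQ : (A:ℚ) * ((x.den:ℕ):ℚ) = (x.num:ℚ) * ((q':ℤ):ℚ) + 1 := by exact_mod_cast hAq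
    have e2 : (x.num:ℚ) = x * ((x.den:ℕ):ℚ) := (div_eq_iff hdxQ.ne').1 (Rat.num_div_den x)
    have e3 : y * ((q':ℤ):ℚ) = (A:ℚ) := by rw [hy]; field_simp
    rw [eq_div_iff (by positivity)]
    linear_combination ((x.den:ℕ):ℚ) * e3 + hAQ + ((q':ℤ):ℚ) * e2
  have hxlty : x < y := by
    have : (0:ℚ) < 1 / ((x.den:ℚ) * ((q':ℤ):ℚ)) := by positivity
    linarith [hkey]
  have hymem : y ∈ fareyFinset Q := by
    rw [mem_fareyFinset]
    have h2 : (0:ℚ) < ((q':ℤ):ℚ) := by exact_mod_cast hq'pos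
    refine ⟨by positivity, ?_, ?_⟩
    · rw [hy, div_le_one h2]
      exact_mod_cast hAle
    · have : (y.den:ℤ) ≤ (Q:ℤ) := by rw [yden]; exact hq'Q
      exact_mod_cast this
  refine ⟨y, hymem, hxlty, ?_, ?_, ?_⟩
  · intro z hz hxz
    by_contra hcon
    push_neg at hcon
    have g1 := gap_lemma hxz
    have g2 := gap_lemma hcon
    obtain ⟨hz0, hzle, hzden⟩ := mem_fareyFinset.1 hz
    have hs0 : (0:ℚ) < (z.den:ℚ) := by exact_mod_cast z.pos
    have hsQ : (z.den:ℚ) ≤ (Q:ℚ) := by exact_mod_cast hzden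
    have hdx : (0:ℚ) < (x.den:ℚ) := by exact_mod_cast x.pos
    have hdy : (0:ℚ) < (y.den:ℚ) := by exact_mod_cast y.pos
    have hydq : (y.den:ℚ) = ((q':ℤ):ℚ) := by exact_mod_cast yden
    have hQsum : (Q:ℚ) < (x.den:ℚ) + (y.den:ℚ) := by
      rw [hydq]
      have : (Q:ℤ) < (x.den:ℤ) + q' := by omega
      exact_mod_cast this
    have hsum : 1/((z.den:ℚ)*(x.den:ℚ)) + 1/((y.den:ℚ)*(z.den:ℚ)) ≤ 1/((x.den:ℚ)*(y.den:ℚ)) := by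
      rw [show (1:ℚ)/((x.den:ℚ)*(y.den:ℚ)) = y - x by rw [hkey, hydq]]
      linarith
    rw [div_add_div _ _ (by positivity) (by positivity), div_le_div_iff₀ (by positivity) (by positivity)] at hsum
    have h9 : (y.den:ℚ) + (x.den:ℚ) ≤ (z.den:ℚ) := by
      nlinarith [hsum, mul_pos (mul_pos hdx hdy) hs0]
    linarith
  · rw [ynum, yden]; linarith
  · rw [yden]; omega

lemma int_dvd_small_eq {q d : ℤ} (hq : 0 < q) (hdvd : q ∣ d) (h1 : -q < d) (h2 : d < q) : d = 0 := by
  obtain ⟨k, hk⟩ := hdvd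
  have hk0 : k = 0 := by
    rcases lt_trichotomy k 0 with h|h|h
    · nlinarith
    · exact h
    · nlinarith
  rw [hk0, mul_zero] at hk
  exact hk

lemma mem_fareyList {Q : ℕ} {x : ℚ} : x ∈ fareyList Q ↔ x ∈ fareyFinset Q :=
  Finset.mem_sort _

lemma farey_pair {Q : ℕ} (hQ : 1 ≤ Q) {i : ℕ} (hi : i + 1 < (fareyList Q).length) :
    ((fareyList Q).getD i 0) ∈ fareyFinset Q ∧ ((fareyList Q).getD (i+1) 0) ∈ fareyFinset Q ∧
    ((fareyList Q).getD i 0) < ((fareyList Q).getD (i+1) 0) ∧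
    ((fareyList Q).getD (i+1) 0).num * (((fareyList Q).getD i 0).den : ℤ)
      - ((fareyList Q).getD i 0).num * (((fareyList Q).getD (i+1) 0).den : ℤ) = 1 ∧
    (Q : ℤ) < (((fareyList Q).getD i 0).den : ℤ) + (((fareyList Q).getD (i+1) 0).den : ℤ) ∧
    (∀ z ∈ fareyFinset Q, ((fareyList Q).getD i 0) < z → ((fareyList Q).getD (i+1) 0) ≤ z) := by
  set l := fareyList Q with hl
  have hsort : l.Pairwise (· < ·) := (Finset.sortedLT_sort _).pairwise
  have hi0 : i < l.length := by omega
  rw [List.getD_eq_getElem l 0 hi0, List.getD_eq_getElem l 0 hi]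
  set x := l[i] with hx
  set y := l[i+1] with hy
  have hxmem : x ∈ fareyFinset Q := (Finset.mem_sort _).1 (List.getElem_mem hi0)
  have hymem : y ∈ fareyFinset Q := (Finset.mem_sort _).1 (List.getElem_mem hi)
  have hxy : x < y := by
    have := List.pairwise_iff_get.1 hsort ⟨i, hi0⟩ ⟨i+1, hi⟩ (by simp)
    simpa using this
  have hy1 : y ≤ 1 := (mem_fareyFinset.1 hymem).2.1
  have hx1 : x < 1 := lt_of_lt_of_le hxy hy1
  obtain ⟨w, hwmem, hxw, hwmin, hwuni, hwden⟩ := farey_succ hQ hxmem hx1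
  have hwy : w = y := by
    have h1 : w ≤ y := hwmin y hymem hxy
    have h2 : y ≤ w := by
      obtain ⟨⟨j, hj⟩, hjw⟩ := List.mem_iff_get.1 (mem_fareyList.2 hwmem)
      have hij : i < j := by
        have : (⟨i, hi0⟩ : Fin l.length) < ⟨j, hj⟩ := by
          apply hsort.sortedLT.strictMono_get.lt_iff_lt.1
          rw [hjw]
          exact hxw
        exact this
      have : l.get ⟨i+1, hi⟩ ≤ l.get ⟨j, hj⟩ := by
        apply hsort.sortedLT.strictMono_get.monotone
        exact Fin.mk_le_mk.2 (by omega)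
      rw [hjw] at this
      exact this
    exact le_antisymm h1 h2
  rw [hwy] at hwuni hwden hwmin
  exact ⟨hxmem, hymem, hxy, hwuni, hwden, hwmin⟩

def grid (Q : ℕ) (c : Fin 2 → ℕ) : Finset (ℕ × ℕ) :=
  (Finset.Icc 1 Q ×ˢ Finset.Icc 1 Q).filter fun p =>
    Nat.gcd p.1 p.2 = 1 ∧ Q < p.1 + p.2 ∧ p.1 % 2 = c 0 % 2 ∧ p.2 % 2 = c 1 % 2

lemma Nr_eq_grid {Q : ℕ} (hQ : 1 ≤ Q) (c : Fin 2 → ℕ) : Nr Q 2 2 c = (grid Q c).card := by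
  rw [Nr]
  apply Finset.card_bij (fun i _ =>
    (((fareyList Q).getD i 0).den, ((fareyList Q).getD (i+1) 0).den))
  · -- maps into grid
    intro i hi
    rw [Finset.mem_filter, Finset.mem_range] at hi
    obtain ⟨hilen, hP⟩ := hi
    have hi1 : i + 1 < (fareyList Q).length := by omega
    obtain ⟨hxm, hym, hxy, huni, hden, -⟩ := farey_pair hQ hi1
    set x := (fareyList Q).getD i 0
    set y := (fareyList Q).getD (i+1) 0
    rw [grid, Finset.mem_filter, Finset.mem_product, Finset.mem_Icc, Finset.mem_Icc]
    refine ⟨⟨⟨x.pos, (mem_fareyFinset.1 hxm).2.2⟩, ⟨y.pos, (mem_fareyFinset.1 hym).2.2⟩⟩, ?_, ?_, ?_, ?_⟩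
    · have : IsCoprime ((x.den:ℤ)) ((y.den:ℤ)) := ⟨y.num, -x.num, by linarith⟩
      have := Int.isCoprime_iff_gcd_eq_one.1 this
      rwa [Int.gcd_natCast_natCast] at this
    · exact_mod_cast hden
    · have h0 := hP 0
      rw [show ((0:Fin 2):ℕ) = 0 from rfl, add_zero] at h0
      exact h0
    · have h1 := hP 1
      rw [show ((1:Fin 2):ℕ) = 1 from rfl] at h1
      exact h1
  · -- injective
    intro i₁ hi₁ i₂ hi₂ heq
    rw [Finset.mem_filter, Finset.mem_range] at hi₁ hi₂
    have hl₁ : i₁ + 1 < (fareyList Q).length := by omega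
    have hl₂ : i₂ + 1 < (fareyList Q).length := by omega
    obtain ⟨hxm₁, hym₁, hxy₁, huni₁, hden₁, -⟩ := farey_pair hQ hl₁
    obtain ⟨hxm₂, hym₂, hxy₂, huni₂, hden₂, -⟩ := farey_pair hQ hl₂
    set x₁ := (fareyList Q).getD i₁ 0 with hx₁
    set y₁ := (fareyList Q).getD (i₁+1) 0 with hy₁
    set x₂ := (fareyList Q).getD i₂ 0 with hx₂
    set y₂ := (fareyList Q).getD (i₂+1) 0 with hy₂
    have hqe : x₁.den = x₂.den := congrArg Prod.fst heq
    have hq'e : y₁.den = y₂.den := congrArg Prod.snd heq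
    rw [← hqe, ← hq'e] at huni₂
    have hq0 : (0:ℤ) < (x₁.den:ℤ) := by exact_mod_cast x₁.pos
    have hcop : IsCoprime ((x₁.den:ℤ)) ((y₁.den:ℤ)) := ⟨y₁.num, -x₁.num, by linarith⟩
    have hdvd : (x₁.den:ℤ) ∣ (y₁.den:ℤ) * (x₁.num - x₂.num) :=
      ⟨y₁.num - y₂.num, by linarith⟩
    have hdvd2 : (x₁.den:ℤ) ∣ (x₁.num - x₂.num) := hcop.dvd_of_dvd_mul_left hdvd
    have hb₁ : 0 ≤ x₁.num := Rat.num_nonneg.2 (mem_fareyFinset.1 hxm₁).1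
    have hb₂ : 0 ≤ x₂.num := Rat.num_nonneg.2 (mem_fareyFinset.1 hxm₂).1
    have hu₁ : x₁.num < (x₁.den:ℤ) := by
      exact_mod_cast Rat.lt_one_iff_num_lt_denom.2
        (lt_of_lt_of_le hxy₁ (mem_fareyFinset.1 hym₁).2.1)
    have hu₂ : x₂.num < (x₂.den:ℤ) := by
      exact_mod_cast Rat.lt_one_iff_num_lt_denom.2
        (lt_of_lt_of_le hxy₂ (mem_fareyFinset.1 hym₂).2.1)
    rw [← hqe] at hu₂
    have hnum : x₁.num = x₂.num := by
      have := int_dvd_small_eq hq0 hdvd2 (by omega) (by omega)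
      omega
    have hxx : x₁ = x₂ := by
      have h1 := Rat.num_div_den x₁
      have h2 := Rat.num_div_den x₂
      rw [← h1, ← h2, hnum, hqe]
    -- indices equal
    have hsort : (fareyList Q).Pairwise (· < ·) := (Finset.sortedLT_sort _).pairwise
    have hgi : (fareyList Q).get ⟨i₁, by omega⟩ = (fareyList Q).get ⟨i₂, by omega⟩ := by
      rw [List.get_eq_getElem, List.get_eq_getElem,
        ← List.getD_eq_getElem (fareyList Q) 0 (by omega : i₁ < (fareyList Q).length),
        ← List.getD_eq_getElem (fareyList Q) 0 (by omega : i₂ < (fareyList Q).length)]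
      exact hxx
    simpa using hsort.sortedLT.strictMono_get.injective hgi
  · -- surjective
    intro p hp
    rw [grid, Finset.mem_filter, Finset.mem_product, Finset.mem_Icc, Finset.mem_Icc] at hp
    obtain ⟨⟨⟨hp1, hp1Q⟩, ⟨hp2, hp2Q⟩⟩, hgcd, hsum, hc1, hc2⟩ := hp
    set q := p.1
    set q' := p.2
    have hq0 : (0:ℤ) < (q:ℤ) := by exact_mod_cast hp1
    have hq'0 : (0:ℤ) < (q':ℤ) := by exact_mod_cast hp2
    have hcop : IsCoprime ((q:ℤ)) ((q':ℤ)) := by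
      rw [Int.isCoprime_iff_gcd_eq_one, Int.gcd_natCast_natCast]
      exact hgcd
    obtain ⟨u, v, huv⟩ := hcop
    set a : ℤ := (-v) % q with ha
    have ha0 : 0 ≤ a := Int.emod_nonneg _ hq0.ne'
    have haq : a < q := Int.emod_lt_of_pos _ hq0
    have hmod : (q:ℤ) ∣ a * q' + 1 := by
      have h1 : a ≡ -v [ZMOD (q:ℤ)] := Int.emod_emod_of_dvd _ dvd_rfl
      have h2 : a * q' + 1 ≡ (-v) * q' + 1 [ZMOD (q:ℤ)] := (h1.mul_right _).add_right 1
      have h3 : (-v) * q' + 1 = u * q := by linarith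
      have h4 : a * q' + 1 ≡ 0 [ZMOD (q:ℤ)] := by
        refine h2.trans ?_
        rw [h3]
        exact (Int.modEq_zero_iff_dvd).2 ⟨u, by ring⟩
      exact (Int.modEq_zero_iff_dvd).1 h4
    obtain ⟨w, hw⟩ := hmod
    have hacop : Nat.Coprime a.natAbs ((q:ℤ)).natAbs := by
      have h := Int.isCoprime_iff_gcd_eq_one.1 (⟨-(q':ℤ), w, by linarith⟩ : IsCoprime a (q:ℤ))
      simpa [Int.gcd] using h
    set x : ℚ := (a:ℚ) / ((q:ℤ):ℚ) with hxdef
    have xnum : x.num = a := Rat.num_div_eq_of_coprime hq0 hacop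
    have xden : ((x.den:ℤ)) = (q:ℤ) := Rat.den_div_eq_of_coprime hq0 hacop
    have hqQ : (0:ℚ) < ((q:ℤ):ℚ) := by exact_mod_cast hq0
    have hxmem : x ∈ fareyFinset Q := by
      rw [mem_fareyFinset]
      refine ⟨by positivity, ?_, ?_⟩
      · rw [hxdef, div_le_one hqQ]
        exact_mod_cast haq.le
      · have : (x.den:ℤ) ≤ (Q:ℤ) := by rw [xden]; exact_mod_cast hp1Q
        exact_mod_cast this
    have hx1 : x < 1 := by
      rw [hxdef, div_lt_one hqQ]
      exact_mod_cast haq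
    -- successor
    obtain ⟨y, hymem, hxy, hymin, hyuni, hyden⟩ := farey_succ hQ hxmem hx1
    -- y.den = q'
    have hydq' : (y.den:ℤ) = (q':ℤ) := by
      have hdvd1 : (q:ℤ) ∣ x.num * (y.den:ℤ) + 1 := by
        rw [← xden]
        exact ⟨y.num, by linarith⟩
      have hdvd3 : (q:ℤ) ∣ x.num * ((y.den:ℤ) - q') := by
        obtain ⟨w1, hw1⟩ := hdvd1
        refine ⟨w1 - w, ?_⟩
        rw [xnum] at hw1 ⊢
        ring_nf
        ring_nf at hw1 hw
        linarith
      have hxcop : IsCoprime ((q:ℤ)) (x.num) := by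
        rw [xnum]
        exact ⟨w, -(q':ℤ), by linarith⟩
      have hdvd4 : (q:ℤ) ∣ ((y.den:ℤ) - q') := hxcop.dvd_of_dvd_mul_left hdvd3
      have hyQ : (y.den:ℤ) ≤ (Q:ℤ) := by
        exact_mod_cast (mem_fareyFinset.1 hymem).2.2
      have hyg : (Q:ℤ) - q < (y.den:ℤ) := by
        rw [← xden]; omega
      have hq'g : (Q:ℤ) - q < (q':ℤ) := by
        have : (Q:ℤ) < q + q' := by exact_mod_cast hsum
        omega
      have hq'le : (q':ℤ) ≤ (Q:ℤ) := by exact_mod_cast hp2Q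
      have := int_dvd_small_eq hq0 hdvd4 (by omega) (by omega)
      omega
    -- find index of x
    obtain ⟨⟨j, hj⟩, hjx⟩ := List.mem_iff_get.1 (mem_fareyList.2 hxmem)
    obtain ⟨⟨j', hj'⟩, hj'y⟩ := List.mem_iff_get.1 (mem_fareyList.2 hymem)
    have hsort : (fareyList Q).Pairwise (· < ·) := (Finset.sortedLT_sort _).pairwise
    have hjj' : j < j' := by
      have : (⟨j, hj⟩ : Fin _) < ⟨j', hj'⟩ := by
        apply hsort.sortedLT.strictMono_get.lt_iff_lt.1
        rw [hjx, hj'y]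
        exact hxy
      exact this
    have hj1 : j + 1 < (fareyList Q).length := by omega
    have hgx : (fareyList Q).getD j 0 = x := by
      rw [List.getD_eq_getElem _ 0 (by omega : j < (fareyList Q).length)]
      rw [← hjx]; rfl
    have hgy : (fareyList Q).getD (j+1) 0 = y := by
      obtain ⟨-, hym2, hxy2, -, -, hmin2⟩ := farey_pair hQ hj1
      rw [hgx] at hxy2 hmin2
      have h1 : y ≤ (fareyList Q).getD (j+1) 0 := by
        apply hymin _ hym2 hxy2
      have h2 : (fareyList Q).getD (j+1) 0 ≤ y := by
        apply hmin2 _ hymem hxy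
      exact le_antisymm h2 h1
    have hxq : x.den = q := by exact_mod_cast xden
    have hyq : y.den = q' := by exact_mod_cast hydq'
    refine ⟨j, ?_, ?_⟩
    · rw [Finset.mem_filter, Finset.mem_range]
      refine ⟨by omega, ?_⟩
      intro jj
      fin_cases jj
      · show ((fareyList Q).getD (j + ((0:Fin 2):ℕ)) 0).den % 2 = c 0 % 2
        rw [show ((0:Fin 2):ℕ) = 0 from rfl, add_zero, hgx, hxq]
        exact hc1
      · show ((fareyList Q).getD (j + ((1:Fin 2):ℕ)) 0).den % 2 = c 1 % 2
        rw [show ((1:Fin 2):ℕ) = 1 from rfl, hgy, hyq]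
        exact hc2
    · rw [hgx, hgy, hxq, hyq]

def Sf (Q : ℕ) : ℕ := ∑ q ∈ Finset.Icc 1 Q, Nat.totient q
def Ef (Q : ℕ) : ℕ := ∑ q ∈ (Finset.Icc 1 Q).filter (fun q => q % 2 = 0), Nat.totient q

lemma inner_card {Q q : ℕ} (h1 : 1 ≤ q) (hq : q ≤ Q) :
    (((Finset.Icc 1 Q)).filter (fun q' => Nat.gcd q q' = 1 ∧ Q < q + q')).card
      = Nat.totient q := by
  have : ((Finset.Icc 1 Q)).filter (fun q' => Nat.gcd q q' = 1 ∧ Q < q + q')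
      = (Finset.Ico (Q - q + 1) (Q - q + 1 + q)).filter (q.Coprime) := by
    ext q'
    simp only [Finset.mem_filter, Finset.mem_Icc, Finset.mem_Ico, Nat.Coprime]
    constructor
    · rintro ⟨⟨ha, hb⟩, hc, hd⟩
      exact ⟨⟨by omega, by omega⟩, hc⟩
    · rintro ⟨⟨ha, hb⟩, hc⟩
      exact ⟨⟨by omega, by omega⟩, hc, by omega⟩
  rw [this, Nat.filter_coprime_Ico_eq_totient q (Q - q + 1)]

lemma grid_card_eq_sum {Q : ℕ} (c : Fin 2 → ℕ) :
    (grid Q c).card = ∑ q ∈ (Finset.Icc 1 Q).filter (fun q => q % 2 = c 0 % 2),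
      ((Finset.Icc 1 Q).filter
        (fun q' => Nat.gcd q q' = 1 ∧ Q < q + q' ∧ q' % 2 = c 1 % 2)).card := by
  rw [Finset.card_eq_sum_card_fiberwise
    (f := Prod.fst) (t := (Finset.Icc 1 Q).filter (fun q => q % 2 = c 0 % 2))]
  · apply Finset.sum_congr rfl
    intro q hq
    apply Finset.card_bij (fun p _ => p.2)
    · intro p hp
      rw [Finset.mem_filter] at hp
      obtain ⟨hp1, hp2⟩ := hp
      rw [grid, Finset.mem_filter, Finset.mem_product] at hp1
      rw [Finset.mem_filter]
      rw [← hp2]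
      exact ⟨hp1.1.2, hp1.2.1, hp1.2.2.1, hp1.2.2.2.2⟩
    · rintro ⟨a1, b1⟩ h1 ⟨a2, b2⟩ h2 heq
      rw [Finset.mem_filter] at h1 h2
      simp only at heq
      simp only [Prod.mk.injEq]
      exact ⟨h1.2.trans h2.2.symm, heq⟩
    · intro q' hq'
      rw [Finset.mem_filter] at hq'
      rw [Finset.mem_filter] at hq
      refine ⟨(q, q'), ?_, rfl⟩
      rw [Finset.mem_filter, grid, Finset.mem_filter, Finset.mem_product]
      exact ⟨⟨⟨hq.1, hq'.1⟩, hq'.2.1, hq'.2.2.1, hq.2, hq'.2.2.2⟩, rfl⟩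
  · intro p hp
    rw [Finset.mem_coe, grid, Finset.mem_filter, Finset.mem_product] at hp
    rw [Finset.mem_coe, Finset.mem_filter]
    exact ⟨hp.1.1, hp.2.2.2.1⟩

lemma grid01_card {Q : ℕ} : (grid Q ![0,1]).card = Ef Q := by
  rw [grid_card_eq_sum, Ef]
  apply Finset.sum_congr
  · apply Finset.filter_congr
    intro q _
    simp
  · intro q hq
    rw [Finset.mem_filter] at hq
    obtain ⟨hqI, hqe⟩ := hq
    rw [Finset.mem_Icc] at hqI
    rw [← inner_card hqI.1 hqI.2]
    congr 1
    apply Finset.filter_congr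
    intro q' _
    simp only [Matrix.cons_val_one, Matrix.head_cons, Matrix.cons_val_zero]
    constructor
    · rintro ⟨h1, h2, h3⟩; exact ⟨h1, h2⟩
    · rintro ⟨h1, h2⟩
      refine ⟨h1, h2, ?_⟩
      have h2q : ¬ (2 ∣ q') := by
        intro hdvd
        have : 2 ∣ Nat.gcd q q' := Nat.dvd_gcd (by omega) hdvd
        omega
      omega

lemma grid10_card {Q : ℕ} : (grid Q ![1,0]).card = (grid Q ![0,1]).card := by
  have hmem : ∀ (a b : ℕ), (a,b) ∈ grid Q ![1,0] ↔ (b,a) ∈ grid Q ![0,1] := by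
    intro a b
    rw [grid, grid, Finset.mem_filter, Finset.mem_filter, Finset.mem_product, Finset.mem_product]
    simp only [Matrix.cons_val_zero, Matrix.cons_val_one, Matrix.head_cons]
    constructor
    · rintro ⟨⟨h1,h2⟩,h3,h4,h5,h6⟩
      exact ⟨⟨h2,h1⟩, by rwa [Nat.gcd_comm] at h3, by omega, h6, h5⟩
    · rintro ⟨⟨h1,h2⟩,h3,h4,h5,h6⟩
      exact ⟨⟨h2,h1⟩, by rwa [Nat.gcd_comm] at h3, by omega, h6, h5⟩
  apply Finset.card_bij (fun p _ => Prod.swap p)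
  · rintro ⟨a,b⟩ hp
    exact (hmem a b).1 hp
  · intro p1 _ p2 _ heq
    exact Prod.swap_injective heq
  · rintro ⟨a,b⟩ hp
    exact ⟨(b,a), (hmem b a).2 hp, rfl⟩

lemma grid_odd_card {Q : ℕ} : (grid Q ![1,0]).card + (grid Q ![1,1]).card
    = ∑ q ∈ (Finset.Icc 1 Q).filter (fun q => q % 2 = 1), Nat.totient q := by
  rw [grid_card_eq_sum, grid_card_eq_sum]
  have hc0 : (![1,0] : Fin 2 → ℕ) 0 % 2 = 1 := rfl
  have hc1 : (![1,1] : Fin 2 → ℕ) 0 % 2 = 1 := rfl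
  rw [show ((![1,0] : Fin 2 → ℕ) 0 % 2) = 1 % 2 from rfl]
  rw [show ((![1,1] : Fin 2 → ℕ) 0 % 2) = 1 % 2 from rfl]
  rw [← Finset.sum_add_distrib]
  apply Finset.sum_congr
  · apply Finset.filter_congr; intro q _; simp
  · intro q hq
    rw [Finset.mem_filter, Finset.mem_Icc] at hq
    rw [← inner_card hq.1.1 hq.1.2]
    have split := Finset.card_filter_add_card_filter_not
      (s := (Finset.Icc 1 Q).filter (fun q' => Nat.gcd q q' = 1 ∧ Q < q + q'))
      (p := fun q' => q' % 2 = 0)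
    rw [Finset.filter_filter, Finset.filter_filter] at split
    rw [← split]
    congr 1
    · refine congrArg Finset.card ?_
      ext x
      rw [Finset.mem_filter, Finset.mem_filter]
      simp only [Finset.mem_filter, Finset.mem_Icc, Matrix.cons_val_one, Matrix.head_cons, Matrix.cons_val_zero]
      constructor
      · rintro ⟨h1, h2, h3, h4⟩
        exact ⟨h1, ⟨h2, h3⟩, by omega⟩
      · rintro ⟨h1, ⟨h2, h3⟩, h4⟩
        exact ⟨h1, h2, h3, by omega⟩
    · refine congrArg Finset.card ?_
      ext x
      rw [Finset.mem_filter, Finset.mem_filter]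
      simp only [Finset.mem_filter, Finset.mem_Icc, Matrix.cons_val_one, Matrix.head_cons, Matrix.cons_val_zero]
      constructor
      · rintro ⟨h1, h2, h3, h4⟩
        exact ⟨h1, ⟨h2, h3⟩, by omega⟩
      · rintro ⟨h1, ⟨h2, h3⟩, h4⟩
        exact ⟨h1, h2, h3, by omega⟩

lemma grid00_empty {Q : ℕ} : grid Q ![0,0] = ∅ := by
  rw [grid, Finset.filter_eq_empty_iff]
  rintro ⟨a, b⟩ -
  simp only [Matrix.cons_val_zero, Matrix.cons_val_one, Matrix.head_cons]
  rintro ⟨h1, h2, h3, h4⟩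
  have : 2 ∣ Nat.gcd a b := Nat.dvd_gcd (by omega) (by omega)
  omega

lemma filter_split_Sf {Q : ℕ} :
    Ef Q + (∑ q ∈ (Finset.Icc 1 Q).filter (fun q => q % 2 = 1), Nat.totient q) = Sf Q := by
  rw [Ef, Sf,
    ← Finset.sum_filter_add_sum_filter_not (Finset.Icc 1 Q) (fun q => q % 2 = 0) Nat.totient]
  congr 1
  apply Finset.sum_congr
  · apply Finset.filter_congr
    intro q _
    constructor <;> (intro h; omega)
  · intros; rfl

lemma card_fareyFinset {Q : ℕ} (hQ : 1 ≤ Q) : (fareyFinset Q).card = Sf Q + 1 := by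
  have h0 : (0:ℚ) ∈ fareyFinset Q := zero_mem_farey hQ
  rw [← Finset.card_erase_add_one h0]
  congr 1
  rw [Sf, Finset.card_eq_sum_card_fiberwise (f := fun x : ℚ => x.den) (t := Finset.Icc 1 Q)
    (fun x hx => by
      rw [Finset.mem_coe, Finset.mem_Icc]
      exact ⟨x.pos, (mem_fareyFinset.1 (Finset.mem_of_mem_erase hx)).2.2⟩)]
  apply Finset.sum_congr rfl
  intro q hq
  rw [Finset.mem_Icc] at hq
  rw [show Nat.totient q = ((Finset.Ico 1 (1+q)).filter (q.Coprime)).card from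
    (Nat.filter_coprime_Ico_eq_totient q 1).symm]
  apply Finset.card_bij (fun x _ => x.num.toNat)
  · intro x hx
    rw [Finset.mem_filter] at hx
    obtain ⟨hxe, hxden⟩ := hx
    have hxm := Finset.mem_of_mem_erase hxe
    have hxne := Finset.ne_of_mem_erase hxe
    obtain ⟨h0x, h1x, -⟩ := mem_fareyFinset.1 hxm
    have hnum0 : 0 < x.num := by
      rcases lt_or_eq_of_le (Rat.num_nonneg.2 h0x) with h|h
      · exact h
      · exact absurd (by rwa [eq_comm, Rat.num_eq_zero] at h) hxne
    have hnd : x.num ≤ (x.den:ℤ) := by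
      have h2 : (x.num:ℚ) ≤ (x.den:ℚ) := by
        rw [← Rat.num_div_den x] at h1x
        exact (div_le_one (by exact_mod_cast x.pos)).1 h1x
      exact_mod_cast h2
    rw [Finset.mem_filter, Finset.mem_Ico]
    refine ⟨⟨by omega, by omega⟩, ?_⟩
    have hna : x.num.toNat = x.num.natAbs := by omega
    rw [hna, ← hxden]
    exact x.reduced.symm
  · intro x₁ hx₁ x₂ hx₂ heq
    rw [Finset.mem_filter] at hx₁ hx₂
    have e1 : 0 ≤ x₁.num := Rat.num_nonneg.2 (mem_fareyFinset.1 (Finset.mem_of_mem_erase hx₁.1)).1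
    have e2 : 0 ≤ x₂.num := Rat.num_nonneg.2 (mem_fareyFinset.1 (Finset.mem_of_mem_erase hx₂.1)).1
    have hnum : x₁.num = x₂.num := by omega
    rw [← Rat.num_div_den x₁, ← Rat.num_div_den x₂, hnum, hx₁.2, hx₂.2]
  · intro a ha
    rw [Finset.mem_filter, Finset.mem_Ico] at ha
    obtain ⟨⟨ha1, ha2⟩, hacop⟩ := ha
    have hq0 : (0:ℤ) < (q:ℤ) := by exact_mod_cast hq.1
    have hcop' : Nat.Coprime ((a:ℤ)).natAbs ((q:ℤ)).natAbs := by
      simpa using hacop.symm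
    set x : ℚ := ((a:ℤ):ℚ) / ((q:ℤ):ℚ) with hxd
    have xnum : x.num = (a:ℤ) := Rat.num_div_eq_of_coprime hq0 hcop'
    have xden : ((x.den:ℤ)) = (q:ℤ) := Rat.den_div_eq_of_coprime hq0 hcop'
    have hqQ : (0:ℚ) < ((q:ℤ):ℚ) := by exact_mod_cast hq0
    refine ⟨x, ?_, by rw [xnum]; omega⟩
    rw [Finset.mem_filter]
    constructor
    · rw [Finset.mem_erase]
      refine ⟨?_, ?_⟩
      · intro hx0
        rw [hx0] at xnum
        simp at xnum
        omega
      · rw [mem_fareyFinset]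
        refine ⟨by positivity, ?_, ?_⟩
        · rw [hxd, div_le_one hqQ]
          exact_mod_cast (by omega : a ≤ q)
        · have : (x.den:ℤ) ≤ (Q:ℤ) := by rw [xden]; exact_mod_cast hq.2
          exact_mod_cast this
    · exact_mod_cast xden

lemma farey0 : fareyFinset 0 = ∅ := rfl

lemma Nr00 (Q : ℕ) : Nr Q 2 2 ![0,0] = 0 := by
  rcases Nat.eq_zero_or_pos Q with h|h
  · subst h
    rw [Nr]
    simp [fareyList, farey0]
  · rw [Nr_eq_grid h, grid00_empty, Finset.card_empty]

lemma Nr01 {Q : ℕ} (hQ : 1 ≤ Q) : Nr Q 2 2 ![0,1] = Ef Q := by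
  rw [Nr_eq_grid hQ, grid01_card]

lemma Nr10 {Q : ℕ} (hQ : 1 ≤ Q) : Nr Q 2 2 ![1,0] = Ef Q := by
  rw [Nr_eq_grid hQ, grid10_card, grid01_card]

lemma Nr11 {Q : ℕ} (hQ : 1 ≤ Q) : Nr Q 2 2 ![1,1] + 2 * Ef Q = Sf Q := by
  have h1 := grid_odd_card (Q := Q)
  have h2 := filter_split_Sf (Q := Q)
  have h3 := Nr_eq_grid hQ ![1,1]
  have h4 := grid10_card (Q := Q)
  have h5 := grid01_card (Q := Q)
  omega

open ArithmeticFunction in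
lemma totient_eq_moebius_sum {n : ℕ} (hn : 0 < n) :
    (Nat.totient n : ℤ) = ∑ p ∈ n.divisorsAntidiagonal, (moebius p.1) * p.2 := by
  have h := (ArithmeticFunction.sum_eq_iff_sum_smul_moebius_eq
    (f := fun n => (Nat.totient n : ℤ)) (g := fun n => (n : ℤ))).1 ?_ n hn
  · rw [← h]
    apply Finset.sum_congr rfl
    intro p _
    simp [zsmul_eq_mul]
  · intro m hm
    exact_mod_cast Nat.sum_totient m

lemma sum_swap_div (Q : ℕ) (F : ℕ → ℕ → ℤ) :
    ∑ n ∈ Finset.Icc 1 Q, ∑ p ∈ n.divisorsAntidiagonal, F p.1 p.2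
      = ∑ d ∈ Finset.Icc 1 Q, ∑ m ∈ Finset.Icc 1 (Q / d), F d m := by
  rw [Finset.sum_sigma' (Finset.Icc 1 Q) (fun n => n.divisorsAntidiagonal) (fun _ p => F p.1 p.2),
    Finset.sum_sigma' (Finset.Icc 1 Q) (fun d => Finset.Icc 1 (Q / d)) (fun d m => F d m)]
  apply Finset.sum_nbij' (i := fun x => (⟨x.2.1, x.2.2⟩ : Σ _ : ℕ, ℕ))
    (j := fun x => (⟨x.1 * x.2, (x.1, x.2)⟩ : Σ _ : ℕ, ℕ × ℕ))
  · rintro ⟨n, p⟩ h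
    rw [Finset.mem_sigma, Finset.mem_Icc] at h
    obtain ⟨⟨hn1, hn2⟩, hp⟩ := h
    rw [Nat.mem_divisorsAntidiagonal] at hp
    obtain ⟨hpe, hne⟩ := hp
    rw [Finset.mem_sigma, Finset.mem_Icc, Finset.mem_Icc]
    have hp1 : 0 < p.1 := by
      rcases Nat.eq_zero_or_pos p.1 with h|h
      · exfalso; rw [h, Nat.zero_mul] at hpe; omega
      · exact h
    have hp2 : 0 < p.2 := by
      rcases Nat.eq_zero_or_pos p.2 with h|h
      · exfalso; rw [h, Nat.mul_zero] at hpe; omega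
      · exact h
    refine ⟨⟨hp1, le_trans (Nat.le_of_dvd (by omega) ⟨p.2, hpe.symm⟩) hn2⟩, hp2, ?_⟩
    rw [Nat.le_div_iff_mul_le hp1]
    calc p.2 * p.1 = n := by rw [Nat.mul_comm]; exact hpe
      _ ≤ Q := hn2
  · rintro ⟨d, m⟩ h
    rw [Finset.mem_sigma, Finset.mem_Icc, Finset.mem_Icc] at h
    obtain ⟨⟨hd1, hd2⟩, hm1, hm2⟩ := h
    rw [Finset.mem_sigma, Finset.mem_Icc, Nat.mem_divisorsAntidiagonal]
    have hmul : d * m ≤ Q := by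
      rw [Nat.le_div_iff_mul_le (by omega)] at hm2
      calc d * m = m * d := Nat.mul_comm _ _
        _ ≤ Q := hm2
    exact ⟨⟨Nat.mul_pos (by omega) (by omega), hmul⟩, rfl,
      Nat.mul_ne_zero (by omega) (by omega)⟩
  · rintro ⟨n, a, b⟩ h
    rw [Finset.mem_sigma, Nat.mem_divisorsAntidiagonal] at h
    obtain ⟨-, hpe, -⟩ := h
    simp only at hpe
    subst hpe
    rfl
  · rintro ⟨d, m⟩ _
    rfl
  · rintro ⟨n, p⟩ _
    rfl

def Tg (n : ℕ) : ℤ := ∑ m ∈ Finset.Icc 1 n, (m : ℤ)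

lemma Tg_zero : Tg 0 = 0 := rfl

lemma two_Tg (n : ℕ) : 2 * Tg n = n * (n + 1) := by
  induction n with
  | zero => rfl
  | succ k ih =>
    rw [Tg, Finset.sum_Icc_succ_top (by omega), ← Tg, mul_add, ih]
    push_cast
    ring

lemma Tg_nonneg (n : ℕ) : 0 ≤ Tg n := by
  have h := two_Tg n
  have h2 : (0:ℤ) ≤ (n:ℤ) * ((n:ℤ)+1) := by positivity
  linarith

lemma Tg_le_sq (n : ℕ) : (Tg n : ℝ) ≤ (n:ℝ)^2 := by
  have h := two_Tg n
  have h' : 2 * (Tg n : ℝ) = (n:ℝ) * ((n:ℝ) + 1) := by exact_mod_cast h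
  rcases Nat.eq_zero_or_pos n with h0|h0
  · subst h0; simp [Tg_zero]
  · have : (1:ℝ) ≤ (n:ℝ) := by exact_mod_cast h0
    nlinarith

lemma Sf_eq (Q : ℕ) : (Sf Q : ℤ) = ∑ d ∈ Finset.Icc 1 Q,
    (ArithmeticFunction.moebius d) * Tg (Q / d) := by
  have h1 : (Sf Q : ℤ) = ∑ n ∈ Finset.Icc 1 Q, (Nat.totient n : ℤ) := by
    rw [Sf]; push_cast; rfl
  rw [h1]
  rw [show ∑ n ∈ Finset.Icc 1 Q, (Nat.totient n : ℤ)
      = ∑ n ∈ Finset.Icc 1 Q, ∑ p ∈ n.divisorsAntidiagonal,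
        (ArithmeticFunction.moebius p.1) * p.2 from
    Finset.sum_congr rfl fun n hn => totient_eq_moebius_sum
      (by rw [Finset.mem_Icc] at hn; omega)]
  rw [sum_swap_div Q (fun d m => (ArithmeticFunction.moebius d) * m)]
  apply Finset.sum_congr rfl
  intro d _
  rw [Tg, Finset.mul_sum]

lemma nat_div_tendsto_atTop {d : ℕ} (hd : 0 < d) :
    Filter.Tendsto (fun Q : ℕ => Q / d) Filter.atTop Filter.atTop := by
  apply Filter.tendsto_atTop_atTop.2
  intro b
  exact ⟨b * d, fun a ha => (Nat.le_div_iff_mul_le hd).2 ha⟩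

lemma floor_div_tendsto {d : ℕ} (hd : 0 < d) :
    Filter.Tendsto (fun Q : ℕ => ((Q / d : ℕ) : ℝ) / (Q:ℝ)) Filter.atTop
      (nhds (1 / (d:ℝ))) := by
  have hd0 : (0:ℝ) < (d:ℝ) := by exact_mod_cast hd
  apply tendsto_of_tendsto_of_tendsto_of_le_of_le'
    (g := fun Q : ℕ => 1/(d:ℝ) - (1/(Q:ℝ)))
    (h := fun _ : ℕ => 1/(d:ℝ))
  · have := (tendsto_one_div_atTop_nhds_zero_nat).const_sub (1/(d:ℝ))
    simpa using this
  · exact tendsto_const_nhds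
  · filter_upwards [Filter.eventually_ge_atTop 1] with Q hQ
    have hQ0 : (0:ℝ) < (Q:ℝ) := by exact_mod_cast hQ
    rw [div_sub_div _ _ hd0.ne' hQ0.ne', div_le_div_iff₀ (by positivity) hQ0]
    have key : (Q:ℝ) - (d:ℝ) ≤ (d:ℝ) * ((Q / d : ℕ) : ℝ) := by
      have h1 : Q < d * (Q / d) + d := by
        have h2 := Nat.div_add_mod Q d
        have h3 := Nat.mod_lt Q hd
        omega
      have : (Q:ℝ) < (d:ℝ) * ((Q / d : ℕ) : ℝ) + (d:ℝ) := by exact_mod_cast h1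
      linarith
    nlinarith
  · filter_upwards [Filter.eventually_ge_atTop 1] with Q hQ
    have hQ0 : (0:ℝ) < (Q:ℝ) := by exact_mod_cast hQ
    rw [div_le_div_iff₀ hQ0 hd0]
    have := Nat.cast_div_le (α := ℝ) (m := Q) (n := d)
    calc ((Q / d : ℕ) : ℝ) * (d:ℝ) ≤ ((Q:ℝ)/(d:ℝ)) * d := by
          apply mul_le_mul_of_nonneg_right this hd0.le
      _ = (Q:ℝ) := by field_simp
      _ = 1 * Q := by ring

noncomputable def mc : ℝ := ∑' d : ℕ, ((ArithmeticFunction.moebius d : ℤ) : ℝ) / (2 * (d:ℝ)^2)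

lemma summable_invsq : Summable (fun d : ℕ => 1/(d:ℝ)^2) :=
  Real.summable_one_div_nat_pow.2 one_lt_two

lemma mc_term_bound (d : ℕ) : |((ArithmeticFunction.moebius d : ℤ) : ℝ) / (2 * (d:ℝ)^2)|
    ≤ 1/(d:ℝ)^2 := by
  rcases Nat.eq_zero_or_pos d with h|h
  · subst h; simp
  · have hd0 : (0:ℝ) < (d:ℝ)^2 := by positivity
    rw [abs_div, abs_of_pos (by positivity : (0:ℝ) < 2 * (d:ℝ)^2), div_le_div_iff₀ (by positivity) hd0]
    have hm : |((ArithmeticFunction.moebius d : ℤ) : ℝ)| ≤ 1 := by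
      exact_mod_cast ArithmeticFunction.abs_moebius_le_one (n := d)
    nlinarith

lemma Tg_real (m : ℕ) : (2:ℝ) * ((Tg m : ℤ):ℝ) = (m:ℝ) * ((m:ℝ)+1) := by
  have h2 := two_Tg m
  have h3 : ((2 * Tg m : ℤ):ℝ) = (((m:ℤ) * ((m:ℤ)+1) : ℤ):ℝ) := by rw [h2]
  push_cast at h3
  exact h3

lemma Sf_real {Q : ℕ} (hQ : 1 ≤ Q) :
    (Sf Q : ℝ) / (Q:ℝ)^2 = ∑' d : ℕ,
      ((ArithmeticFunction.moebius d : ℤ):ℝ) * ((Tg (Q/d) : ℤ):ℝ) / (Q:ℝ)^2 := by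
  rw [tsum_eq_sum (s := Finset.Icc 1 Q) (by
    intro d hd
    rw [Finset.mem_Icc] at hd
    push_neg at hd
    rcases Nat.eq_zero_or_pos d with h|h
    · subst h; simp
    · have hlt : Q < d := hd h
      rw [Nat.div_eq_of_lt hlt, Tg_zero]
      simp)]
  rw [← Finset.sum_div]
  congr 1
  rw [show ((Sf Q : ℝ)) = ((Sf Q : ℤ) : ℝ) from by push_cast; rfl, Sf_eq]
  push_cast
  rfl

lemma tendsto_Sf : Filter.Tendsto (fun Q : ℕ => (Sf Q : ℝ) / (Q:ℝ)^2)
    Filter.atTop (nhds mc) := by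
  apply Filter.Tendsto.congr' (f₁ := fun Q : ℕ => ∑' d : ℕ,
    ((ArithmeticFunction.moebius d : ℤ):ℝ) * ((Tg (Q/d) : ℤ):ℝ) / (Q:ℝ)^2)
  · filter_upwards [Filter.eventually_ge_atTop 1] with Q hQ
    exact (Sf_real hQ).symm
  rw [mc]
  apply tendsto_tsum_of_dominated_convergence (bound := fun d : ℕ => 1/(d:ℝ)^2) summable_invsq
  · intro d
    rcases Nat.eq_zero_or_pos d with h|h
    · subst h
      simp
    · have hd0 : (0:ℝ) < (d:ℝ) := by exact_mod_cast h
      have hlim1 := floor_div_tendsto h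
      have hlim2 : Filter.Tendsto (fun Q : ℕ => (((Q / d : ℕ):ℝ)+1)/(Q:ℝ))
          Filter.atTop (nhds (1/(d:ℝ))) := by
        have h2 := hlim1.add tendsto_one_div_atTop_nhds_zero_nat
        rw [add_zero] at h2
        apply Filter.Tendsto.congr ?_ h2
        intro Q
        rw [add_div]
      have hprod := (hlim1.mul hlim2).const_mul (((ArithmeticFunction.moebius d : ℤ):ℝ)/2)
      have hdne : (d:ℝ) ≠ 0 := hd0.ne'
      have hval : ((ArithmeticFunction.moebius d : ℤ):ℝ)/2 * (1/(d:ℝ) * (1/(d:ℝ)))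
          = ((ArithmeticFunction.moebius d : ℤ):ℝ)/(2*(d:ℝ)^2) := by
        rw [one_div_mul_one_div, div_mul_div_comm, mul_one, ← pow_two]
      rw [hval] at hprod
      apply hprod.congr'
      filter_upwards [Filter.eventually_ge_atTop 1] with Q hQ
      have hQ0 : (0:ℝ) < (Q:ℝ) := by exact_mod_cast hQ
      have hTg' : ((Tg (Q/d) : ℤ):ℝ) = ((Q/d:ℕ):ℝ) * (((Q/d:ℕ):ℝ)+1) / 2 := by
        linarith [Tg_real (Q/d)]
      rw [hTg']
      field_simp
  · filter_upwards [Filter.eventually_ge_atTop 1] with Q hQ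
    intro d
    rcases Nat.eq_zero_or_pos d with h|h
    · subst h
      simp
    · have hd0 : (0:ℝ) < (d:ℝ) := by exact_mod_cast h
      have hQ0 : (0:ℝ) < (Q:ℝ) := by exact_mod_cast hQ
      rw [Real.norm_eq_abs, abs_div, abs_mul, abs_of_pos (by positivity : (0:ℝ) < (Q:ℝ)^2),
        div_le_div_iff₀ (by positivity) (by positivity : (0:ℝ) < (d:ℝ)^2)]
      have hm : |((ArithmeticFunction.moebius d : ℤ):ℝ)| ≤ 1 := by
        exact_mod_cast ArithmeticFunction.abs_moebius_le_one (n := d)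
      have hTa : |((Tg (Q/d) : ℤ):ℝ)| = ((Tg (Q/d) : ℤ):ℝ) := by
        rw [abs_of_nonneg]
        exact_mod_cast Tg_nonneg (Q/d)
      have hTb : ((Tg (Q/d) : ℤ):ℝ) ≤ ((Q/d:ℕ):ℝ)^2 := Tg_le_sq (Q/d)
      have hmd : ((Q/d:ℕ):ℝ) * (d:ℝ) ≤ (Q:ℝ) := by
        exact_mod_cast Nat.div_mul_le_self Q d
      have hmn : (0:ℝ) ≤ ((Q/d:ℕ):ℝ) := by positivity
      have habs : |((ArithmeticFunction.moebius d : ℤ):ℝ)| * |((Tg (Q/d) : ℤ):ℝ)| * (d:ℝ)^2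
          ≤ ((Q/d:ℕ):ℝ)^2 * (d:ℝ)^2 := by
        rw [hTa]
        have h1 : |((ArithmeticFunction.moebius d : ℤ):ℝ)| * ((Tg (Q/d) : ℤ):ℝ)
            ≤ ((Q/d:ℕ):ℝ)^2 := by
          have h2 := mul_le_mul_of_nonneg_right hm
            (by exact_mod_cast Tg_nonneg (Q/d) : (0:ℝ) ≤ ((Tg (Q/d) : ℤ):ℝ))
          rw [one_mul] at h2
          exact le_trans h2 hTb
        exact mul_le_mul_of_nonneg_right h1 (sq_nonneg (d:ℝ))
      calc |((ArithmeticFunction.moebius d : ℤ):ℝ)| * |((Tg (Q/d) : ℤ):ℝ)| * (d:ℝ)^2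
          ≤ ((Q/d:ℕ):ℝ)^2 * (d:ℝ)^2 := habs
        _ = (((Q/d:ℕ):ℝ) * (d:ℝ))^2 := by ring
        _ ≤ (Q:ℝ)^2 := pow_le_pow_left₀ (by positivity) hmd 2
        _ = 1 * (Q:ℝ)^2 := by ring

lemma summable_mc_terms :
    Summable (fun d : ℕ => ((ArithmeticFunction.moebius d : ℤ):ℝ)/(2*(d:ℝ)^2)) :=
  Summable.of_norm_bounded summable_invsq
    (fun d => by rw [Real.norm_eq_abs]; exact mc_term_bound d)

lemma mc_term_bound2 (d : ℕ) : |((ArithmeticFunction.moebius d : ℤ):ℝ) / (2 * (d:ℝ)^2)|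
    ≤ 1/2 * (1/(d:ℝ)^2) := by
  rcases Nat.eq_zero_or_pos d with h|h
  · subst h; simp
  · have hd0 : (0:ℝ) < (d:ℝ)^2 := by positivity
    rw [abs_div, abs_of_pos (by positivity : (0:ℝ) < 2 * (d:ℝ)^2), one_div_mul_one_div,
      div_le_div_iff₀ (by positivity) (by positivity)]
    have hm : |((ArithmeticFunction.moebius d : ℤ):ℝ)| ≤ 1 := by
      exact_mod_cast ArithmeticFunction.abs_moebius_le_one (n := d)
    nlinarith

lemma zeta_tail : HasSum (fun k : ℕ => 1/(((k+2):ℕ):ℝ)^2) (Real.pi^2/6 - 1) := by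
  apply (hasSum_nat_add_iff (f := fun n : ℕ => 1/((n:ℝ))^2) 2).2
  have hs : ∑ i ∈ Finset.range 2, 1/((i:ℕ):ℝ)^2 = 1 := by
    rw [Finset.sum_range_succ, Finset.sum_range_one]
    norm_num
  rw [hs]
  rw [show Real.pi^2/6 - 1 + 1 = Real.pi^2/6 by ring]
  exact hasSum_zeta_two

lemma mc_pos : 0 < mc := by
  set f : ℕ → ℝ := fun d => ((ArithmeticFunction.moebius d : ℤ):ℝ)/(2*(d:ℝ)^2) with hf
  have hsum : Summable f := summable_mc_terms
  have hsum1 : Summable (fun n => f (n+1)) := (summable_nat_add_iff 1).2 hsum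
  have hsum2 : Summable (fun n => f (n+2)) := (summable_nat_add_iff 2).2 hsum
  have h1 : mc = f 0 + ∑' n, f (n+1) := by
    rw [mc]
    exact Summable.tsum_eq_zero_add hsum
  have h2 : ∑' n, f (n+1) = f 1 + ∑' n, f (n+2) := by
    rw [Summable.tsum_eq_zero_add hsum1]
  have hf0 : f 0 = 0 := by simp [hf]
  have hf1 : f 1 = 1/2 := by
    rw [hf]
    simp only [ArithmeticFunction.moebius_apply_one]
    norm_num
  have htail : |∑' n, f (n+2)| ≤ 1/2 * (Real.pi^2/6 - 1) := by
    have hb : ∀ k : ℕ, ‖f (k+2)‖ ≤ 1/2 * (1/(((k+2):ℕ):ℝ)^2) := fun k => by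
      rw [Real.norm_eq_abs]
      exact mc_term_bound2 (k+2)
    have hs2 : Summable (fun k : ℕ => 1/2 * (1/(((k+2):ℕ):ℝ)^2)) := zeta_tail.summable.mul_left _
    calc |∑' n, f (n+2)| ≤ ∑' n, ‖f (n+2)‖ := by
          rw [← Real.norm_eq_abs]
          exact norm_tsum_le_tsum_norm (hsum2.abs.congr (fun n => (Real.norm_eq_abs _).symm))
      _ ≤ ∑' k, 1/2 * (1/(((k+2):ℕ):ℝ)^2) := Summable.tsum_le_tsum hb
          (hsum2.abs.congr (fun n => (Real.norm_eq_abs _).symm)) hs2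
      _ = 1/2 * (Real.pi^2/6 - 1) := by
          rw [tsum_mul_left, zeta_tail.tsum_eq]
  have hpi : Real.pi^2 < 12 := by
    nlinarith [Real.pi_lt_d2, Real.pi_pos]
  have : -(1/2 * (Real.pi^2/6 - 1)) ≤ ∑' n, f (n+2) := neg_le_of_abs_le htail
  rw [h1, h2, hf0, hf1]
  nlinarith

lemma Sf_zero : Sf 0 = 0 := rfl

lemma Ef_rec (Q : ℕ) : Ef Q = Sf (Q/2) + Ef (Q/2) := by
  rw [Ef]
  have hbij : ∑ q ∈ (Finset.Icc 1 Q).filter (fun q => q % 2 = 0), Nat.totient q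
      = ∑ m ∈ Finset.Icc 1 (Q/2), Nat.totient (2*m) := by
    apply Finset.sum_nbij' (i := fun q => q / 2) (j := fun m => 2 * m)
    · intro q hq
      rw [Finset.mem_filter, Finset.mem_Icc] at hq
      rw [Finset.mem_Icc]
      omega
    · intro m hm
      rw [Finset.mem_Icc] at hm
      rw [Finset.mem_filter, Finset.mem_Icc]
      omega
    · intro q hq
      rw [Finset.mem_filter] at hq
      omega
    · intro m _
      omega
    · intro q hq
      rw [Finset.mem_filter] at hq
      congr 1
      omega
  rw [hbij]
  have hval : ∀ m ∈ Finset.Icc 1 (Q/2), Nat.totient (2*m)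
      = Nat.totient m + (if m % 2 = 0 then Nat.totient m else 0) := by
    intro m hm
    by_cases h : m % 2 = 0
    · rw [if_pos h, Nat.totient_mul_of_prime_of_dvd Nat.prime_two (by omega : 2 ∣ m)]
      omega
    · rw [if_neg h, Nat.totient_mul (Nat.Prime.coprime_iff_not_dvd Nat.prime_two |>.2
        (by omega : ¬ 2 ∣ m)), Nat.totient_two, one_mul, Nat.add_zero]
  rw [Finset.sum_congr rfl hval, Finset.sum_add_distrib]
  congr 1
  rw [Ef, Finset.sum_filter]

lemma Ef_formula (Q : ℕ) : Ef Q = ∑ k ∈ Finset.range Q, Sf (Q / 2^(k+1)) := by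
  induction Q using Nat.strong_induction_on with
  | _ Q IH =>
    rcases Nat.eq_zero_or_pos Q with h0|h0
    · subst h0; rfl
    · obtain ⟨n, rfl⟩ : ∃ n, Q = n + 1 := ⟨Q - 1, by omega⟩
      rw [Ef_rec, IH ((n+1)/2) (by omega)]
      rw [Finset.sum_range_succ' (fun k => Sf ((n+1) / 2^(k+1))) n]
      have hdd : ∀ k, (n+1)/2/2^(k+1) = (n+1)/2^(k+1+1) := by
        intro k
        rw [Nat.div_div_eq_div_mul, show 2 * 2^(k+1) = 2^(k+1+1) from by rw [pow_succ]; ring]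
      have hsub : ∑ k ∈ Finset.range ((n+1)/2), Sf ((n+1)/2^(k+1+1))
          = ∑ k ∈ Finset.range n, Sf ((n+1)/2^(k+1+1)) := by
        apply Finset.sum_subset (Finset.range_subset_range.2 (by omega))
        intro k hk hk2
        rw [Finset.mem_range] at hk hk2
        push_neg at hk2
        have hp : (n+1) < 2^(k+1+1) := by
          have h1 : (n+1)/2 < 2^((n+1)/2) := Nat.lt_two_pow_self
          have h2 : 2^((n+1)/2) ≤ 2^k := Nat.pow_le_pow_right (by omega) (by omega)
          have h3 : 2^(k+1+1) = 4 * 2^k := by rw [pow_succ, pow_succ]; ring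
          omega
        rw [Nat.div_eq_of_lt hp, Sf_zero]
      rw [show ∑ k ∈ Finset.range ((n+1)/2), Sf ((n+1)/2/2^(k+1))
          = ∑ k ∈ Finset.range ((n+1)/2), Sf ((n+1)/2^(k+1+1)) from
        Finset.sum_congr rfl (fun k _ => by rw [hdd k]), hsub,
        show (n+1)/2^(0+1) = (n+1)/2 from by norm_num]
      omega

lemma Sf_le_sq (n : ℕ) : Sf n ≤ n^2 := by
  rw [Sf]
  calc ∑ q ∈ Finset.Icc 1 n, Nat.totient q ≤ ∑ _q ∈ Finset.Icc 1 n, n :=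
        Finset.sum_le_sum (fun q hq => by
          rw [Finset.mem_Icc] at hq
          exact le_trans (Nat.totient_le q) hq.2)
    _ = (Finset.Icc 1 n).card * n := by rw [Finset.sum_const, smul_eq_mul]
    _ ≤ n * n := by
        rw [Nat.card_Icc]
        exact Nat.mul_le_mul_right n (by omega)
    _ = n^2 := (sq n).symm

lemma geom_quarter : ∑' k : ℕ, (1/4:ℝ)^(k+1) = 1/3 := by
  calc ∑' k : ℕ, (1/4:ℝ)^(k+1) = ∑' k : ℕ, (1/4:ℝ)*(1/4:ℝ)^k := by
        exact tsum_congr (fun k => by ring)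
    _ = (1/4) * ∑' k : ℕ, (1/4:ℝ)^k := tsum_mul_left
    _ = (1/4) * (1 - 1/4:ℝ)⁻¹ := by
        rw [tsum_geometric_of_lt_one (by norm_num) (by norm_num)]
    _ = 1/3 := by norm_num

lemma quarter_pow (k : ℕ) : (1/((2:ℝ)^(k+1))) * (1/((2:ℝ)^(k+1))) = (1/4:ℝ)^(k+1) := by
  rw [one_div_mul_one_div, ← mul_pow]
  norm_num [one_div, ← inv_pow]

lemma tendsto_Ef : Filter.Tendsto (fun Q : ℕ => (Ef Q : ℝ)/(Q:ℝ)^2)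
    Filter.atTop (nhds (mc/3)) := by
  have heq : ∀ Q : ℕ, (Ef Q:ℝ)/(Q:ℝ)^2 = ∑' k : ℕ, (Sf (Q / 2^(k+1)) : ℝ)/(Q:ℝ)^2 := by
    intro Q
    rw [tsum_eq_sum (s := Finset.range Q) (by
      intro k hk
      rw [Finset.mem_range] at hk
      push_neg at hk
      have hlt : Q < 2^(k+1) := lt_of_le_of_lt hk
        (lt_of_lt_of_le (Nat.lt_two_pow_self (n := k)) (Nat.pow_le_pow_right (by omega) (by omega)))
      rw [Nat.div_eq_of_lt hlt, Sf_zero]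
      norm_num)]
    rw [← Finset.sum_div, Ef_formula Q]
    push_cast
    rfl
  have hgsum : ∑' k : ℕ, mc * (1/4:ℝ)^(k+1) = mc/3 := by
    rw [tsum_mul_left, geom_quarter]
    ring
  have htsum : Filter.Tendsto (fun Q : ℕ => ∑' k : ℕ, (Sf (Q / 2^(k+1)) : ℝ)/(Q:ℝ)^2)
      Filter.atTop (nhds (∑' k : ℕ, mc * (1/4:ℝ)^(k+1))) := by
    apply tendsto_tsum_of_dominated_convergence (bound := fun k : ℕ => (1/4:ℝ)^(k+1))
    · exact ((summable_geometric_of_lt_one (by norm_num : (0:ℝ) ≤ 1/4)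
        (by norm_num)).mul_right (1/4)).congr (fun k => (pow_succ (1/4:ℝ) k).symm)
    · intro k
      have hD : 0 < 2^(k+1) := Nat.pow_pos (by omega)
      have hDR : (0:ℝ) < ((2^(k+1) : ℕ):ℝ) := by exact_mod_cast hD
      have hcomp := tendsto_Sf.comp (nat_div_tendsto_atTop hD)
      have hfl := floor_div_tendsto hD
      have hprod := hcomp.mul (hfl.mul hfl)
      have hval : mc * (1/((2^(k+1):ℕ):ℝ) * (1/((2^(k+1):ℕ):ℝ))) = mc * (1/4:ℝ)^(k+1) := by
        congr 1
        rw [show (((2^(k+1):ℕ)):ℝ) = (2:ℝ)^(k+1) from by push_cast; rfl]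
        exact quarter_pow k
      rw [hval] at hprod
      apply hprod.congr'
      filter_upwards [Filter.eventually_ge_atTop (2^(k+1))] with Q hQ
      have hm1 : 1 ≤ Q / 2^(k+1) := (Nat.one_le_div_iff hD).2 hQ
      have hm0 : (0:ℝ) < ((Q / 2^(k+1) : ℕ):ℝ) := by exact_mod_cast hm1
      have hQ0 : (0:ℝ) < (Q:ℝ) := by
        have : 1 ≤ Q := le_trans (Nat.one_le_two_pow) hQ
        exact_mod_cast this
      show (Sf (Q / 2^(k+1)) : ℝ)/((Q / 2^(k+1) : ℕ):ℝ)^2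
          * (((Q / 2^(k+1) : ℕ):ℝ)/(Q:ℝ) * (((Q / 2^(k+1) : ℕ):ℝ)/(Q:ℝ)))
          = (Sf (Q / 2^(k+1)) : ℝ)/(Q:ℝ)^2
      field_simp
    · filter_upwards [Filter.eventually_ge_atTop 1] with Q hQ
      intro k
      have hD : 0 < 2^(k+1) := Nat.pow_pos (by omega)
      have hDR : (0:ℝ) < ((2^(k+1) : ℕ):ℝ) := by exact_mod_cast hD
      have hQ0 : (0:ℝ) < (Q:ℝ) := by exact_mod_cast hQ
      rw [Real.norm_eq_abs, abs_of_nonneg (by positivity)]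
      rw [div_le_iff₀ (by positivity)]
      have hc1 : (Sf (Q / 2^(k+1)) : ℝ) ≤ ((Q / 2^(k+1) : ℕ):ℝ)^2 := by
        have := Sf_le_sq (Q / 2^(k+1))
        exact_mod_cast this
      have hc2 : ((Q / 2^(k+1) : ℕ):ℝ) ≤ (Q:ℝ)/((2^(k+1):ℕ):ℝ) := Nat.cast_div_le
      have hc3 : ((Q / 2^(k+1) : ℕ):ℝ)^2 ≤ ((Q:ℝ)/((2^(k+1):ℕ):ℝ))^2 :=
        pow_le_pow_left₀ (by positivity) hc2 2
      have hc4 : ((Q:ℝ)/((2^(k+1):ℕ):ℝ))^2 = (1/4:ℝ)^(k+1) * (Q:ℝ)^2 := by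
        rw [div_pow, show (((2^(k+1):ℕ)):ℝ) = (2:ℝ)^(k+1) from by push_cast; rfl,
          ← quarter_pow k]
        field_simp
      calc (Sf (Q / 2^(k+1)) : ℝ) ≤ ((Q / 2^(k+1) : ℕ):ℝ)^2 := hc1
        _ ≤ ((Q:ℝ)/((2^(k+1):ℕ):ℝ))^2 := hc3
        _ = (1/4:ℝ)^(k+1) * (Q:ℝ)^2 := hc4
  rw [hgsum] at htsum
  exact htsum.congr (fun Q => (heq Q).symm)

lemma Sf_pos {Q : ℕ} (hQ : 1 ≤ Q) : 0 < Sf Q := by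
  rw [Sf]
  have h1 : (1:ℕ) ∈ Finset.Icc 1 Q := by rw [Finset.mem_Icc]; omega
  have := Finset.single_le_sum (f := fun q => Nat.totient q) (fun i _ => Nat.zero_le _) h1
  exact lt_of_lt_of_le (by simp) this

lemma rho_eq {Q : ℕ} (hQ : 1 ≤ Q) (c : Fin 2 → ℕ) :
    rho Q 2 2 c = (Nr Q 2 2 c : ℝ) / (Sf Q : ℝ) := by
  rw [rho, card_fareyFinset hQ]
  congr 1
  push_cast
  ring

lemma tendsto_ratio : Filter.Tendsto (fun Q : ℕ => (Ef Q : ℝ)/(Sf Q : ℝ))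
    Filter.atTop (nhds (1/3)) := by
  have h := tendsto_Ef.div tendsto_Sf mc_pos.ne'
  have hval : (mc/3)/mc = 1/3 := by
    rw [div_div, mul_comm 3 mc, ← div_div, div_self mc_pos.ne']
  rw [hval] at h
  apply h.congr'
  filter_upwards [Filter.eventually_ge_atTop 1] with Q hQ
  have hQ0 : ((Q:ℝ)) ≠ 0 := by
    have : (0:ℝ) < (Q:ℝ) := by exact_mod_cast hQ
    exact this.ne'
  have hS : ((Sf Q:ℕ):ℝ) ≠ 0 := by
    have : (0:ℝ) < ((Sf Q:ℕ):ℝ) := by exact_mod_cast Sf_pos hQ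
    exact this.ne'
  rw [Pi.div_apply]
  field_simp

/-- As `Q → ∞`, each of the proportions of pairs of consecutive Farey
fractions with denominators (even, odd), (odd, even) and (odd, odd) tends to `1/3`,
while the proportion of pairs (even, even) is `0` for every `Q`. -/
theorem rho_two_mod_two :
    Tendsto (fun Q : ℕ => rho Q 2 2 ![0, 1]) atTop (𝓝 (1 / 3)) ∧
    Tendsto (fun Q : ℕ => rho Q 2 2 ![1, 0]) atTop (𝓝 (1 / 3)) ∧
    Tendsto (fun Q : ℕ => rho Q 2 2 ![1, 1]) atTop (𝓝 (1 / 3)) ∧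
    ∀ Q : ℕ, rho Q 2 2 ![0, 0] = 0 := by
  refine ⟨?_, ?_, ?_, ?_⟩
  · apply tendsto_ratio.congr'
    filter_upwards [Filter.eventually_ge_atTop 1] with Q hQ
    rw [rho_eq hQ, Nr01 hQ]
  · apply tendsto_ratio.congr'
    filter_upwards [Filter.eventually_ge_atTop 1] with Q hQ
    rw [rho_eq hQ, Nr10 hQ]
  · have h2 : Filter.Tendsto (fun Q : ℕ => 1 - 2 * ((Ef Q : ℝ)/(Sf Q : ℝ)))
        Filter.atTop (nhds (1 - 2 * (1/3))) :=
      (tendsto_ratio.const_mul 2).const_sub 1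
    rw [show (1:ℝ) - 2 * (1/3) = 1/3 by norm_num] at h2
    apply h2.congr'
    filter_upwards [Filter.eventually_ge_atTop 1] with Q hQ
    rw [rho_eq hQ]
    have hN := Nr11 hQ
    have hNR : (Nr Q 2 2 ![1,1] : ℝ) = (Sf Q : ℝ) - 2 * (Ef Q : ℝ) := by
      have : ((Nr Q 2 2 ![1,1] + 2 * Ef Q : ℕ) : ℝ) = ((Sf Q : ℕ) : ℝ) := by
        exact_mod_cast congrArg (fun n : ℕ => (n:ℝ)) hN
      push_cast at this
      linarith
    have hS : ((Sf Q:ℕ):ℝ) ≠ 0 := by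
      have : (0:ℝ) < ((Sf Q:ℕ):ℝ) := by exact_mod_cast Sf_pos hQ
      exact this.ne'
    rw [hNR]
    field_simp
  · intro Q
    rw [rho, Nr00 Q]
    simp
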